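/- Let b ∈ ℝ with b ≠ 0, c > 0, q > 0, x0 ≥ 0. Let f : ℝ → ℝ be a measurable probability density supported on [x0, ∞) (f ≥ 0 and ∫_{x0}^∞ f = 1) such that f·ln f is integrable on [x0, ∞), ∫_{x0}^∞ f(x)·ln((x-x0)/c) dx = γ_E/(b·q), and ∫_{x0}^∞ f(x)·((x-x0)/c)^(-b·q) dx = 1, where γ_E is the Euler–Mascheroni constant. Then -∫_{x0}^∞ f(x)·ln(f(x)) dx ≤ -ln(|b|q/c) + ((b·q+1)/(b·q))·γ_E + 1, i.e. the IF2 distribution maximizes differential entropy under these constraints. -/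

import Mathlib

open MeasureTheory Real Filter Set Topology

/-- The IF2 distribution maximizes the differential entropy among continuous
distributions supported on `[x0, ∞)` satisfying the two moment constraints. -/
theorem if2_max_entropy (b c q x0 : ℝ) (hb : b ≠ 0) (hc : 0 < c) (hq : 0 < q)
    (hx0 : 0 ≤ x0) (f : ℝ → ℝ)
    (hf_meas : Measurable f)
    (hf_nonneg : ∀ x, 0 ≤ f x)
    (hf_supp : ∀ x, x < x0 → f x = 0)
    (hf_prob : ∫ x in Set.Ioi x0, f x = 1)
    (hf_logint : IntegrableOn (fun x => f x * Real.log (f x)) (Set.Ioi x0))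
    (hc1_int : IntegrableOn (fun x => f x * Real.log ((x - x0) / c)) (Set.Ioi x0))
    (hc1 : ∫ x in Set.Ioi x0, f x * Real.log ((x - x0) / c) =
      Real.eulerMascheroniConstant / (b * q))
    (hc2_int : IntegrableOn (fun x => f x * ((x - x0) / c) ^ (-(b * q))) (Set.Ioi x0))
    (hc2 : ∫ x in Set.Ioi x0, f x * ((x - x0) / c) ^ (-(b * q)) = 1) :
    -∫ x in Set.Ioi x0, f x * Real.log (f x) ≤
      -Real.log (|b| * q / c) +
        (b * q + 1) / (b * q) * Real.eulerMascheroniConstant + 1 := by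
  have hB : b * q ≠ 0 := mul_ne_zero hb hq.ne'
  have hbpos : 0 < |b| := abs_pos.mpr hb
  have hApos : 0 < |b| * q / c := by positivity
  -- f is integrable
  have hf_int : IntegrableOn f (Set.Ioi x0) := by
    by_contra h
    rw [MeasureTheory.integral_undef h] at hf_prob
    norm_num at hf_prob
  set g : ℝ → ℝ := fun x => (|b| * q / c) * ((x - x0) / c) ^ (-(b * q) - 1) *
      Real.exp (-((x - x0) / c) ^ (-(b * q))) with hgdef
  have hy_pos : ∀ x ∈ Set.Ioi x0, 0 < (x - x0) / c := by
    intro x hx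
    exact div_pos (by simpa using sub_pos.mpr hx.out) hc
  have hg_pos : ∀ x ∈ Set.Ioi x0, 0 < g x := by
    intro x hx
    have hy := hy_pos x hx
    have : (0:ℝ) < ((x - x0) / c) ^ (-(b * q) - 1) := Real.rpow_pos_of_pos hy _
    positivity
  have hlog_g : ∀ x ∈ Set.Ioi x0, Real.log (g x) =
      Real.log (|b| * q / c) + (-(b * q) - 1) * Real.log ((x - x0) / c)
        - ((x - x0) / c) ^ (-(b * q)) := by
    intro x hx
    have hy := hy_pos x hx
    rw [hgdef]
    rw [Real.log_mul (by positivity) (Real.exp_pos _).ne',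
      Real.log_mul hApos.ne' (Real.rpow_pos_of_pos hy _).ne',
      Real.log_exp, Real.log_rpow hy]
    ring
  -- derivative of the auxiliary antiderivative on (x0, ∞)
  have hF : ∀ x ∈ Set.Ioi x0,
      HasDerivAt (fun t => Real.exp (-((t - x0) / c) ^ (-(b * q))))
        (Real.exp (-((x - x0) / c) ^ (-(b * q))) *
          (-(1 / c * -(b * q) * ((x - x0) / c) ^ (-(b * q) - 1)))) x := by
    intro x hx
    have hy := hy_pos x hx
    have hu : HasDerivAt (fun t : ℝ => (t - x0) / c) (1 / c) x := by
      simpa using ((hasDerivAt_id x).sub_const x0).div_const c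
    have hr : HasDerivAt (fun t : ℝ => ((t - x0) / c) ^ (-(b * q)))
        (1 / c * -(b * q) * ((x - x0) / c) ^ (-(b * q) - 1)) x :=
      hu.rpow_const (Or.inl hy.ne')
    exact hr.neg.exp
  -- ∫ g = 1 and integrability of g
  have hg_main : IntegrableOn g (Set.Ioi x0) ∧ ∫ x in Set.Ioi x0, g x = 1 := by
    rcases hb.lt_or_gt with hbneg | hbposs
    · -- b < 0 : Weibull-type, p := -(b*q) > 0
      have hp : 0 < -(b * q) := by nlinarith
      set G : ℝ → ℝ := fun x => 1 - Real.exp (-((x - x0) / c) ^ (-(b * q))) with hGdef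
      have hGderiv : ∀ x ∈ Set.Ioi x0, HasDerivAt G (g x) x := by
        intro x hx
        have := ((hF x hx).const_sub 1)
        refine this.congr_deriv ?_
        rw [hgdef]
        have hab : |b| * q = -(b * q) := by rw [abs_of_neg hbneg]; ring
        rw [hab]; ring
      have hGcont : ContinuousWithinAt G (Set.Ici x0) x0 := by
        have h1 : ContinuousWithinAt (fun x : ℝ => (x - x0) / c) (Set.Ici x0) x0 :=
          (continuousWithinAt_id.sub continuousWithinAt_const).div_const c
        have h2 : ContinuousWithinAt (fun x : ℝ => ((x - x0) / c) ^ (-(b * q)))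
            (Set.Ici x0) x0 := by
          apply h1.rpow_const
          right; exact hp.le
        exact continuousWithinAt_const.sub
          (Real.continuous_exp.continuousAt.comp_continuousWithinAt h2.neg)
      have hGtop : Tendsto G atTop (𝓝 1) := by
        have h1 : Tendsto (fun x : ℝ => (x - x0) / c) atTop atTop :=
          (tendsto_atTop_add_const_right _ (-x0) tendsto_id).atTop_div_const hc
        have h2 : Tendsto (fun y : ℝ => y ^ (-(b * q))) atTop atTop :=
          tendsto_rpow_atTop hp
        have h3 : Tendsto (fun x : ℝ => Real.exp (-((x - x0) / c) ^ (-(b * q)))) atTop (𝓝 0) :=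
          Real.tendsto_exp_atBot.comp ((tendsto_neg_atTop_atBot).comp (h2.comp h1))
        simpa using (tendsto_const_nhds.sub h3)
      have hgpos' : ∀ x ∈ Set.Ioi x0, 0 ≤ g x := fun x hx => (hg_pos x hx).le
      have hint := integrableOn_Ioi_deriv_of_nonneg hGcont hGderiv hgpos' hGtop
      have heq := integral_Ioi_of_hasDerivAt_of_nonneg hGcont hGderiv hgpos' hGtop
      refine ⟨hint, ?_⟩
      rw [heq, hGdef]
      simp [Real.zero_rpow hp.ne']
    · -- b > 0 : Fréchet-type
      have hp : 0 < b * q := by positivity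
      set G : ℝ → ℝ := fun x => if x ≤ x0 then (0:ℝ)
        else Real.exp (-((x - x0) / c) ^ (-(b * q))) with hGdef
      have hGeq : ∀ x ∈ Set.Ioi x0, G x = Real.exp (-((x - x0) / c) ^ (-(b * q))) := by
        intro x hx
        rw [hGdef]
        simp [not_le.mpr hx.out]
      have hGderiv : ∀ x ∈ Set.Ioi x0, HasDerivAt G (g x) x := by
        intro x hx
        have hval : g x = Real.exp (-((x - x0) / c) ^ (-(b * q))) *
            (-(1 / c * -(b * q) * ((x - x0) / c) ^ (-(b * q) - 1))) := by
          rw [hgdef]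
          have hab : |b| * q = b * q := by rw [abs_of_pos hbposs]
          rw [hab]; ring
        rw [hval]
        refine (hF x hx).congr_of_eventuallyEq ?_
        filter_upwards [isOpen_Ioi.mem_nhds hx] with t ht
        exact (hGeq t ht)
      have hGcont : ContinuousWithinAt G (Set.Ici x0) x0 := by
        have hG0 : G x0 = 0 := by rw [hGdef]; simp
        rw [ContinuousWithinAt, hG0]
        rw [show Set.Ici x0 = insert x0 (Set.Ioi x0) by rw [Set.Ioi_insert],
          nhdsWithin_insert]
        rw [tendsto_sup]
        constructor
        · rw [tendsto_pure_left]
          intro s hs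
          simpa [hG0] using mem_of_mem_nhds hs
        · have h1 : Tendsto (fun x : ℝ => (x - x0) / c) (𝓝[>] x0) (𝓝[>] 0) := by
            apply tendsto_nhdsWithin_of_tendsto_nhds_of_eventually_within
            · have : Tendsto (fun x : ℝ => (x - x0) / c) (𝓝 x0) (𝓝 ((x0 - x0) / c)) :=
                ((continuous_id.sub continuous_const).div_const c).tendsto x0
              simpa using this.mono_left nhdsWithin_le_nhds
            · filter_upwards [self_mem_nhdsWithin] with t ht
              exact hy_pos t ht
          have h2 : Tendsto (fun y : ℝ => y ^ (-(b * q))) (𝓝[>] 0) atTop := by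
            refine ((tendsto_rpow_atTop hp).comp tendsto_inv_nhdsGT_zero).congr' ?_
            filter_upwards [self_mem_nhdsWithin] with y hy
            simp only [Function.comp]
            rw [Real.inv_rpow hy.out.le, ← Real.rpow_neg hy.out.le]
          have h3 : Tendsto G (𝓝[>] x0) (𝓝 0) := by
            refine (Real.tendsto_exp_atBot.comp
              (tendsto_neg_atTop_atBot.comp (h2.comp h1))).congr' ?_
            filter_upwards [self_mem_nhdsWithin] with t ht
            exact ((hGeq t ht)).symm
          exact h3
      have hGtop : Tendsto G atTop (𝓝 1) := by
        have h1 : Tendsto (fun x : ℝ => (x - x0) / c) atTop atTop :=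
          (tendsto_atTop_add_const_right _ (-x0) tendsto_id).atTop_div_const hc
        have h2 : Tendsto (fun y : ℝ => y ^ (-(b * q))) atTop (𝓝 0) := by
          simpa using tendsto_rpow_neg_atTop hp
        have h3 : Tendsto (fun x : ℝ => Real.exp (-((x - x0) / c) ^ (-(b * q)))) atTop (𝓝 1) := by
          have h4 := (h2.comp h1).neg
          rw [neg_zero] at h4
          simpa [Function.comp_def] using (Real.continuous_exp.tendsto 0).comp h4
        refine h3.congr' ?_
        filter_upwards [eventually_gt_atTop x0] with t ht
        exact (hGeq t ht).symm
      have hgpos' : ∀ x ∈ Set.Ioi x0, 0 ≤ g x := fun x hx => (hg_pos x hx).le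
      have hint := integrableOn_Ioi_deriv_of_nonneg hGcont hGderiv hgpos' hGtop
      have heq := integral_Ioi_of_hasDerivAt_of_nonneg hGcont hGderiv hgpos' hGtop
      refine ⟨hint, ?_⟩
      rw [heq, hGdef]
      simp
  obtain ⟨hg_int, hg_eq⟩ := hg_main
  -- f * log g equals an integrable combination
  set φ : ℝ → ℝ := fun x => Real.log (|b| * q / c) * f x
      + (-(b * q) - 1) * (f x * Real.log ((x - x0) / c))
      - f x * ((x - x0) / c) ^ (-(b * q)) with hφdef
  have hφ_int : IntegrableOn φ (Set.Ioi x0) :=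
    ((hf_int.const_mul _).add (hc1_int.const_mul _)).sub hc2_int
  have hφ_eq : ∀ x ∈ Set.Ioi x0, f x * Real.log (g x) = φ x := by
    intro x hx
    rw [hφdef]
    simp only
    rw [hlog_g x hx]
    ring
  have hφ_val : ∫ x in Set.Ioi x0, φ x
      = Real.log (|b| * q / c)
        + (-(b * q) - 1) * (Real.eulerMascheroniConstant / (b * q)) - 1 := by
    have hI1 : IntegrableOn (fun x => Real.log (|b| * q / c) * f x
        + (-(b * q) - 1) * (f x * Real.log ((x - x0) / c))) (Set.Ioi x0) :=
      (hf_int.const_mul _).add (hc1_int.const_mul _)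
    have hI2 : IntegrableOn (fun x => Real.log (|b| * q / c) * f x) (Set.Ioi x0) :=
      hf_int.const_mul _
    have hI3 : IntegrableOn
        (fun x => (-(b * q) - 1) * (f x * Real.log ((x - x0) / c))) (Set.Ioi x0) :=
      hc1_int.const_mul _
    rw [hφdef]
    simp only
    rw [MeasureTheory.integral_sub hI1 hc2_int,
      MeasureTheory.integral_add hI2 hI3,
      MeasureTheory.integral_const_mul, MeasureTheory.integral_const_mul,
      hf_prob, hc1, hc2]
    ring
  -- pointwise Gibbs inequality
  have key : ∀ x ∈ Set.Ioi x0, -(f x * Real.log (f x)) ≤ -φ x + (g x - f x) := by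
    intro x hx
    rw [← hφ_eq x hx]
    rcases (hf_nonneg x).eq_or_lt with h0 | hpos
    · rw [← h0]
      simpa using (hg_pos x hx).le
    · have hgx := hg_pos x hx
      have hlog := Real.log_le_sub_one_of_pos (div_pos hgx hpos)
      rw [Real.log_div hgx.ne' hpos.ne'] at hlog
      have h2 := mul_le_mul_of_nonneg_left hlog hpos.le
      have h3 : f x * (g x / f x) = g x := by field_simp
      nlinarith [h2, h3]
  have hrhs_int : IntegrableOn (fun x => -φ x + (g x - f x)) (Set.Ioi x0) :=
    hφ_int.neg.add (hg_int.sub hf_int)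
  have hL : IntegrableOn (fun x => -(f x * Real.log (f x))) (Set.Ioi x0) := hf_logint.neg
  have hmono := setIntegral_mono_on hL hrhs_int measurableSet_Ioi key
  rw [MeasureTheory.integral_neg] at hmono
  have hsplit : ∫ x in Set.Ioi x0, (-φ x + (g x - f x))
      = -(∫ x in Set.Ioi x0, φ x) + (1 - 1) := by
    have hJ1 : IntegrableOn (fun x => -φ x) (Set.Ioi x0) := hφ_int.neg
    have hJ2 : IntegrableOn (fun x => g x - f x) (Set.Ioi x0) := hg_int.sub hf_int
    rw [MeasureTheory.integral_add hJ1 hJ2,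
      MeasureTheory.integral_neg, MeasureTheory.integral_sub hg_int hf_int,
      hg_eq, hf_prob]
  rw [hsplit, hφ_val] at hmono
  refine hmono.trans_eq ?_
  field_simp
  ring
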